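/- arXiv:1603.06887 — 3 statements merged into one kernel-verified Lean document; each statement's English description precedes it below -/
import Mathlib

section
/- Let A, B, C be three pairwise distinct finite sets of the same cardinality α > 0, such that every pair among them forms a KE collection (which holds automatically). Then {A,B,C} is an hke collection if and only if |A − B − C| = |B ∩ C − A|. -/
open Finset

/-- Union of a finite collection of finite sets. -/
def collU {α : Type*} [DecidableEq α] (Γ : Finset (Finset α)) : Finset α :=
  Γ.sup id

/-- Intersection of a finite collection of finite sets
(equals the usual intersection when the collection is non-empty). -/
def collI {α : Type*} [DecidableEq α] (Γ : Finset (Finset α)) : Finset α :=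
  (Γ.sup id).filter (fun x => ∀ S ∈ Γ, x ∈ S)

/-- `e Γ = |⋃Γ| + |⋂Γ|` as an integer. -/
def collE {α : Type*} [DecidableEq α] (Γ : Finset (Finset α)) : ℤ :=
  (collU Γ).card + (collI Γ).card

/-- `F` is a hereditary König–Egerváry collection with common cardinality `a`. -/
def IsHKE {α : Type*} [DecidableEq α] (F : Finset (Finset α)) (a : ℕ) : Prop :=
  (∀ S ∈ F, S.card = a) ∧
  ∀ Γ ⊆ F, Γ.Nonempty → collE Γ = 2 * (a : ℤ)

lemma mem_collI_aux {α : Type*} [DecidableEq α] {Γ : Finset (Finset α)}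
    (h : Γ.Nonempty) {x : α} : x ∈ collI Γ ↔ ∀ S ∈ Γ, x ∈ S := by
  obtain ⟨T, hT⟩ := h
  simp only [collI, mem_filter, mem_sup, id]
  exact ⟨fun h => h.2, fun h => ⟨⟨T, hT, h T hT⟩, h⟩⟩

lemma collU_singleton {α : Type*} [DecidableEq α] (A : Finset α) :
    collU ({A} : Finset (Finset α)) = A := by simp [collU]

lemma collI_singleton {α : Type*} [DecidableEq α] (A : Finset α) :
    collI ({A} : Finset (Finset α)) = A := by
  ext x; rw [mem_collI_aux (singleton_nonempty A)]; simp

lemma collE_singleton {α : Type*} [DecidableEq α] (A : Finset α) :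
    collE ({A} : Finset (Finset α)) = 2 * (A.card : ℤ) := by
  simp [collE, collU_singleton, collI_singleton]; ring

lemma collU_pair {α : Type*} [DecidableEq α] (A B : Finset α) :
    collU ({A, B} : Finset (Finset α)) = A ∪ B := by
  simp [collU]

lemma collI_pair {α : Type*} [DecidableEq α] (A B : Finset α) :
    collI ({A, B} : Finset (Finset α)) = A ∩ B := by
  ext x
  rw [mem_collI_aux ⟨A, by simp⟩]
  simp [forall_eq_or_imp]

lemma collE_pair {α : Type*} [DecidableEq α] (A B : Finset α) :
    collE ({A, B} : Finset (Finset α)) = (A.card : ℤ) + B.card := by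
  have := Finset.card_union_add_card_inter A B
  simp only [collE, collU_pair, collI_pair]
  -- (cast already aligned)
  omega

lemma collU_triple {α : Type*} [DecidableEq α] (A B C : Finset α) :
    collU ({A, B, C} : Finset (Finset α)) = A ∪ B ∪ C := by
  simp [collU, union_assoc]

lemma collI_triple {α : Type*} [DecidableEq α] (A B C : Finset α) :
    collI ({A, B, C} : Finset (Finset α)) = A ∩ B ∩ C := by
  ext x
  rw [mem_collI_aux ⟨A, by simp⟩]
  simp [forall_eq_or_imp, and_assoc]

lemma triple_key {α : Type*} [DecidableEq α] (A B C : Finset α) (a : ℕ)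
    (hB : B.card = a) (hC : C.card = a) :
    ((A ∪ B ∪ C).card + (A ∩ B ∩ C).card = 2 * a) ↔
      ((A \ B) \ C).card = ((B ∩ C) \ A).card := by
  have e1 : (A \ B) \ C = A \ (B ∪ C) := by ext x; simp; tauto
  have e2 : (B ∩ C) ∩ A = A ∩ B ∩ C := by ext x; simp; tauto
  have e3 : A ∪ B ∪ C = A ∪ (B ∪ C) := union_assoc A B C
  have h1 := Finset.card_sdiff_add_card A (B ∪ C)
  have h2 := Finset.card_inter_add_card_sdiff (B ∩ C) A
  have h3 := Finset.card_union_add_card_inter B C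
  rw [e1, e3]
  rw [e2] at h2
  omega

theorem stmt_4 {α : Type*} [DecidableEq α] (A B C : Finset α) (a : ℕ) (ha : 0 < a)
    (hA : A.card = a) (hB : B.card = a) (hC : C.card = a)
    (hAB : A ≠ B) (hAC : A ≠ C) (hBC : B ≠ C) :
    IsHKE ({A, B, C} : Finset (Finset α)) a ↔
      ((A \ B) \ C).card = ((B ∩ C) \ A).card := by
  rw [← triple_key A B C a hB hC]
  constructor
  · intro ⟨_, h⟩
    have := h {A, B, C} (subset_refl _) ⟨A, by simp⟩
    rw [collE, collU_triple, collI_triple] at this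
    -- (cast already aligned)
    omega
  · intro hkey
    constructor
    · intro S hS
      simp only [mem_insert, mem_singleton] at hS
      rcases hS with rfl | rfl | rfl <;> assumption
    · intro Γ hΓ hne
      have hmem : ∀ S ∈ Γ, S = A ∨ S = B ∨ S = C := by
        intro S hS
        have := hΓ hS
        simpa using this
      by_cases hAΓ : A ∈ Γ <;> by_cases hBΓ : B ∈ Γ <;> by_cases hCΓ : C ∈ Γ
      · have : Γ = {A, B, C} := by
          apply Subset.antisymm
          · intro S hS; rcases hmem S hS with rfl | rfl | rfl <;> simp
          · intro S hS; simp only [mem_insert, mem_singleton] at hS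
            rcases hS with rfl | rfl | rfl <;> assumption
        rw [this, collE, collU_triple, collI_triple]
        -- (cast already aligned)
        omega
      · have : Γ = {A, B} := by
          apply Subset.antisymm
          · intro S hS; rcases hmem S hS with rfl | rfl | rfl
            · simp
            · simp
            · exact absurd hS hCΓ
          · intro S hS; simp only [mem_insert, mem_singleton] at hS
            rcases hS with rfl | rfl <;> assumption
        rw [this, collE_pair, hA, hB]; ring
      · have : Γ = {A, C} := by
          apply Subset.antisymm
          · intro S hS; rcases hmem S hS with rfl | rfl | rfl
            · simp
            · exact absurd hS hBΓ
            · simp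
          · intro S hS; simp only [mem_insert, mem_singleton] at hS
            rcases hS with rfl | rfl <;> assumption
        rw [this, collE_pair, hA, hC]; ring
      · have : Γ = {A} := by
          apply Subset.antisymm
          · intro S hS; rcases hmem S hS with rfl | rfl | rfl
            · simp
            · exact absurd hS hBΓ
            · exact absurd hS hCΓ
          · simp [hAΓ]
        rw [this, collE_singleton, hA]
      · have : Γ = {B, C} := by
          apply Subset.antisymm
          · intro S hS; rcases hmem S hS with rfl | rfl | rfl
            · exact absurd hS hAΓ
            · simp
            · simp
          · intro S hS; simp only [mem_insert, mem_singleton] at hS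
            rcases hS with rfl | rfl <;> assumption
        rw [this, collE_pair, hB, hC]; ring
      · have : Γ = {B} := by
          apply Subset.antisymm
          · intro S hS; rcases hmem S hS with rfl | rfl | rfl
            · exact absurd hS hAΓ
            · simp
            · exact absurd hS hCΓ
          · simp [hBΓ]
        rw [this, collE_singleton, hB]
      · have : Γ = {C} := by
          apply Subset.antisymm
          · intro S hS; rcases hmem S hS with rfl | rfl | rfl
            · exact absurd hS hAΓ
            · exact absurd hS hBΓ
            · simp
          · simp [hCΓ]
        rw [this, collE_singleton, hC]
      · obtain ⟨S, hS⟩ := hne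
        rcases hmem S hS with rfl | rfl | rfl
        · exact absurd hS hAΓ
        · exact absurd hS hBΓ
        · exact absurd hS hCΓ
end

section
/- Let Γ be a finite collection of finite sets of even cardinality |Γ| ≥ 2 such that for each S ∈ Γ, the collection Γ−{S} is an hke collection (all with the same α). Then Γ itself is an hke collection. -/
open Finset

lemma mem_collU {α : Type*} [DecidableEq α] {Γ : Finset (Finset α)} {x : α} :
    x ∈ collU Γ ↔ ∃ S ∈ Γ, x ∈ S := by
  simp [collU, Finset.mem_sup]

lemma mem_collI {α : Type*} [DecidableEq α] {Γ : Finset (Finset α)} {x : α} :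
    x ∈ collI Γ ↔ (∃ S ∈ Γ, x ∈ S) ∧ ∀ S ∈ Γ, x ∈ S := by
  simp [collI, Finset.mem_filter, collU, Finset.mem_sup]

lemma collE_empty {α : Type*} [DecidableEq α] : collE (∅ : Finset (Finset α)) = 0 := by
  simp [collE, collU, collI]

lemma collU_mono {α : Type*} [DecidableEq α] {T Γ : Finset (Finset α)} (h : T ⊆ Γ) :
    collU T ⊆ collU Γ := Finset.le_iff_subset.mp (Finset.sup_mono h)

lemma collI_subset_collU {α : Type*} [DecidableEq α] {Γ : Finset (Finset α)} :
    collI Γ ⊆ collU Γ := Finset.filter_subset _ _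

/-- alternating sum of signs over a powerset of a nonempty set vanishes -/
lemma sum_signs {γ : Type*} [DecidableEq γ] (s : Finset γ) (hs : s.Nonempty) :
    ∑ T ∈ s.powerset, (-1 : ℤ) ^ (T.card + 1) = 0 := by
  simp only [pow_succ]
  rw [← Finset.sum_mul, Finset.sum_powerset_neg_one_pow_card_of_nonempty hs, zero_mul]

/-- alternating sum of signs restricted to subsets of `B ⊆ Γ` -/
lemma sum_signs_sub {γ : Type*} [DecidableEq γ] {s B : Finset γ} (hB : B ⊆ s) :
    ∑ T ∈ s.powerset, (-1 : ℤ) ^ (T.card + 1) * (if T ⊆ B then (1 : ℤ) else 0)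
      = -(if B = ∅ then (1 : ℤ) else 0) := by
  rw [← Finset.sum_subset (Finset.powerset_mono.2 hB)
    (fun T _ hTB => by
      rw [if_neg (fun h => hTB (Finset.mem_powerset.2 h)), mul_zero])]
  calc ∑ T ∈ B.powerset, (-1 : ℤ) ^ (T.card + 1) * (if T ⊆ B then (1 : ℤ) else 0)
      = ∑ T ∈ B.powerset, (-1 : ℤ) ^ T.card * (-1) := by
        refine Finset.sum_congr rfl fun T hT => ?_
        rw [if_pos (Finset.mem_powerset.1 hT), pow_succ]; ring
    _ = -(if B = ∅ then (1 : ℤ) else 0) := by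
        rw [← Finset.sum_mul, Finset.sum_powerset_neg_one_pow_card]
        split_ifs <;> ring

/-- key alternating-sum identity -/
lemma key_sum {α : Type*} [DecidableEq α] (Γ : Finset (Finset α)) (hΓ : Γ.Nonempty) :
    ∑ T ∈ Γ.powerset, (-1 : ℤ) ^ (T.card + 1) * collE T = collE Γ := by
  have hcardU : ∀ T ∈ Γ.powerset, ((collU T).card : ℤ)
      = ∑ x ∈ collU Γ, (if x ∈ collU T then (1 : ℤ) else 0) := by
    intro T hT
    rw [Finset.sum_ite_mem, Finset.inter_eq_right.2 (collU_mono (Finset.mem_powerset.1 hT))]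
    simp
  have hcardI : ∀ T ∈ Γ.powerset, ((collI T).card : ℤ)
      = ∑ x ∈ collU Γ, (if x ∈ collI T then (1 : ℤ) else 0) := by
    intro T hT
    rw [Finset.sum_ite_mem, Finset.inter_eq_right.2
      (collI_subset_collU.trans (collU_mono (Finset.mem_powerset.1 hT)))]
    simp
  calc ∑ T ∈ Γ.powerset, (-1 : ℤ) ^ (T.card + 1) * collE T
      = ∑ T ∈ Γ.powerset, ∑ x ∈ collU Γ, (-1 : ℤ) ^ (T.card + 1) *
          ((if x ∈ collU T then (1 : ℤ) else 0) + (if x ∈ collI T then (1 : ℤ) else 0)) := by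
        refine Finset.sum_congr rfl fun T hT => ?_
        rw [← Finset.mul_sum, Finset.sum_add_distrib, ← hcardU T hT, ← hcardI T hT]
        rfl
    _ = ∑ x ∈ collU Γ, ∑ T ∈ Γ.powerset, (-1 : ℤ) ^ (T.card + 1) *
          ((if x ∈ collU T then (1 : ℤ) else 0) + (if x ∈ collI T then (1 : ℤ) else 0)) :=
        Finset.sum_comm
    _ = ∑ x ∈ collU Γ, ((1 : ℤ) + (if x ∈ collI Γ then (1 : ℤ) else 0)) := by
        refine Finset.sum_congr rfl fun x hx => ?_
        set A : Finset (Finset α) := Γ.filter (fun S => x ∈ S) with hA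
        set B : Finset (Finset α) := Γ.filter (fun S => x ∉ S) with hB
        have hAne : A.Nonempty := by
          obtain ⟨S, hS, hxS⟩ := mem_collU.1 hx
          exact ⟨S, Finset.mem_filter.2 ⟨hS, hxS⟩⟩
        have hBI : (B = ∅) ↔ x ∈ collI Γ := by
          rw [mem_collI, Finset.filter_eq_empty_iff]
          constructor
          · intro h; exact ⟨mem_collU.1 hx, fun S hS => not_not.1 (h hS)⟩
          · intro h S hS; exact not_not.2 (h.2 S hS)
        have hrw : ∀ T ∈ Γ.powerset,
            (-1 : ℤ) ^ (T.card + 1) *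
              ((if x ∈ collU T then (1 : ℤ) else 0) + (if x ∈ collI T then (1 : ℤ) else 0))
            = (-1 : ℤ) ^ (T.card + 1) *
              (((1 : ℤ) - (if T ⊆ B then (1 : ℤ) else 0)) +
                ((if T ⊆ A then (1 : ℤ) else 0) - (if T = ∅ then (1 : ℤ) else 0))) := by
          intro T hT
          have hTΓ := Finset.mem_powerset.1 hT
          have h1 : x ∈ collU T ↔ ¬ T ⊆ B := by
            rw [mem_collU]
            constructor
            · rintro ⟨S, hS, hxS⟩
              exact Finset.not_subset.2 ⟨S, hS, fun hSB => (Finset.mem_filter.1 hSB).2 hxS⟩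
            · intro h
              obtain ⟨S, hS, hSB⟩ := Finset.not_subset.1 h
              refine ⟨S, hS, ?_⟩
              by_contra hxS
              exact hSB (Finset.mem_filter.2 ⟨hTΓ hS, hxS⟩)
          have h2 : x ∈ collI T ↔ (T ⊆ A ∧ T ≠ ∅) := by
            rw [mem_collI]
            constructor
            · rintro ⟨⟨S, hS, _⟩, hall⟩
              exact ⟨fun S hS => Finset.mem_filter.2 ⟨hTΓ hS, hall S hS⟩,
                Finset.nonempty_iff_ne_empty.1 ⟨S, hS⟩⟩
            · rintro ⟨hsub, hne⟩
              obtain ⟨S, hS⟩ := Finset.nonempty_iff_ne_empty.2 hne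
              exact ⟨⟨S, hS, (Finset.mem_filter.1 (hsub hS)).2⟩,
                fun S hS => (Finset.mem_filter.1 (hsub hS)).2⟩
          congr 1
          have e1 : (if x ∈ collU T then (1 : ℤ) else 0)
              = 1 - (if T ⊆ B then (1 : ℤ) else 0) := by
            by_cases h : T ⊆ B <;> simp [h1, h]
          have e2 : (if x ∈ collI T then (1 : ℤ) else 0)
              = (if T ⊆ A then (1 : ℤ) else 0) - (if T = ∅ then (1 : ℤ) else 0) := by
            by_cases hTe : T = ∅
            · subst hTe; simp [collI]
            · by_cases hTA : T ⊆ A <;> simp [h2, hTA, hTe]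
          rw [e1, e2]
        rw [Finset.sum_congr rfl hrw]
        have S1 : ∑ T ∈ Γ.powerset, (-1 : ℤ) ^ (T.card + 1) = 0 := sum_signs Γ hΓ
        have SB : ∑ T ∈ Γ.powerset, (-1 : ℤ) ^ (T.card + 1) * (if T ⊆ B then (1 : ℤ) else 0)
            = -(if x ∈ collI Γ then (1 : ℤ) else 0) := by
          rw [sum_signs_sub (Finset.filter_subset _ _)]
          simp [hBI, mem_collI, mem_collU.1 hx]
        have SA : ∑ T ∈ Γ.powerset, (-1 : ℤ) ^ (T.card + 1) * (if T ⊆ A then (1 : ℤ) else 0)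
            = 0 := by
          rw [sum_signs_sub (Finset.filter_subset _ _)]
          simp [Finset.nonempty_iff_ne_empty.1 hAne, mem_collU.1 hx]
        have SE : ∑ T ∈ Γ.powerset, (-1 : ℤ) ^ (T.card + 1) * (if T = ∅ then (1 : ℤ) else 0)
            = -1 := by
          simp only [mul_ite, mul_one, mul_zero]
          rw [Finset.sum_ite_eq' Γ.powerset (∅ : Finset (Finset α))]
          simp
        simp only [mul_add, mul_sub, mul_one, Finset.sum_add_distrib, Finset.sum_sub_distrib]
        rw [S1, SB, SA, SE]
        ring
    _ = collE Γ := by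
        rw [Finset.sum_add_distrib, Finset.sum_const, Finset.sum_ite_mem,
          Finset.inter_eq_right.2 (collI_subset_collU (Γ := Γ))]
        simp [collE, mul_comm]

theorem stmt_8 {α : Type*} [DecidableEq α] (Γ : Finset (Finset α))
    (hcard : 2 ≤ Γ.card) (heven : Even Γ.card) (a : ℕ) (ha : 0 < a)
    (hhke : ∀ S ∈ Γ, IsHKE (Γ.erase S) a) :
    IsHKE Γ a := by
  have hne : Γ.Nonempty := Finset.card_pos.1 (by omega)
  -- every proper nonempty subcollection has collE = 2a
  have hproper : ∀ Δ ⊆ Γ, Δ.Nonempty → Δ ≠ Γ → collE Δ = 2 * (a : ℤ) := by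
    intro Δ hΔΓ hΔne hΔ
    obtain ⟨S, hSΓ, hSΔ⟩ := Finset.exists_of_ssubset (lt_of_le_of_ne hΔΓ hΔ)
    refine (hhke S hSΓ).2 Δ (fun x hx => Finset.mem_erase.2 ⟨?_, hΔΓ hx⟩) hΔne
    rintro rfl; exact hSΔ hx
  constructor
  · intro S hS
    obtain ⟨T, hT, hTS⟩ := Finset.exists_mem_ne (show 1 < Γ.card by omega) S
    exact (hhke T hT).1 S (Finset.mem_erase.2 ⟨hTS.symm, hS⟩)
  · intro Δ hΔΓ hΔne
    by_cases hΔ : Δ = Γ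
    · subst hΔ
      have hkey := key_sum Δ hΔne
      rw [← Finset.add_sum_erase _ _ (Finset.mem_powerset_self Δ)] at hkey
      have hemem : (∅ : Finset (Finset α)) ∈ Δ.powerset.erase Δ :=
        Finset.mem_erase.2 ⟨(Finset.nonempty_iff_ne_empty.1 hΔne).symm,
          Finset.empty_mem_powerset Δ⟩
      rw [← Finset.add_sum_erase _ (fun T => (-1:ℤ)^(T.card+1) * collE T) hemem] at hkey
      have hval : ∀ T ∈ (Δ.powerset.erase Δ).erase ∅,
          (-1 : ℤ) ^ (T.card + 1) * collE T = (-1 : ℤ) ^ (T.card + 1) * (2 * (a : ℤ)) := by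
        intro T hT
        have h1 := Finset.mem_erase.1 hT
        have h2 := Finset.mem_erase.1 h1.2
        rw [hproper T (Finset.mem_powerset.1 h2.2) (Finset.nonempty_iff_ne_empty.2 h1.1) h2.1]
      rw [Finset.sum_congr rfl hval, ← Finset.sum_mul] at hkey
      -- compute the sign sum
      have e1 : (-1 : ℤ) ^ (Δ.card + 1)
          + ∑ T ∈ Δ.powerset.erase Δ, (-1 : ℤ) ^ (T.card + 1) = 0 := by
        rw [Finset.add_sum_erase _ (fun T => (-1:ℤ)^(T.card+1)) (Finset.mem_powerset_self Δ)]
        exact sum_signs Δ hΔne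
      have e2 : (-1 : ℤ) ^ ((∅ : Finset (Finset α)).card + 1)
          + ∑ T ∈ (Δ.powerset.erase Δ).erase ∅, (-1 : ℤ) ^ (T.card + 1)
          = ∑ T ∈ Δ.powerset.erase Δ, (-1 : ℤ) ^ (T.card + 1) :=
        Finset.add_sum_erase _ (fun T => (-1:ℤ)^(T.card+1)) hemem
      have hsign : (-1 : ℤ) ^ (Δ.card + 1) = -1 := by
        rw [pow_succ, heven.neg_one_pow]; ring
      have hsign2 : ∑ T ∈ (Δ.powerset.erase Δ).erase ∅, (-1 : ℤ) ^ (T.card + 1) = 2 := by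
        simp only [Finset.card_empty, pow_one, zero_add] at e2
        rw [hsign] at e1
        omega
      rw [hsign, hsign2] at hkey
      simp [collE_empty] at hkey
      linarith
    · exact hproper Δ hΔΓ hΔne hΔ
end

section
/- Let Γ be a finite collection of finite sets such that Γ−{S} is an hke collection for each S ∈ Γ, and let m be the integer such that |⋂Γ₁ − ⋃Γ₂| − |⋂Γ₂ − ⋃Γ₁| = (−1)^{|Γ₁|+1}·m for all partitions {Γ₁,Γ₂} of Γ into non-empty subcollections. If |Γ| is even, then m = 0. -/
open Finset

theorem stmt_9 {α : Type*} [DecidableEq α] (Γ : Finset (Finset α))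
    (hcard : 2 ≤ Γ.card) (heven : Even Γ.card) (a : ℕ) (ha : 0 < a)
    (hhke : ∀ S ∈ Γ, IsHKE (Γ.erase S) a) (m : ℤ)
    (hm : ∀ Γ₁ Γ₂ : Finset (Finset α),
      Γ₁ ∪ Γ₂ = Γ → Disjoint Γ₁ Γ₂ → Γ₁.Nonempty → Γ₂.Nonempty →
      ((collI Γ₁ \ collU Γ₂).card : ℤ) - ((collI Γ₂ \ collU Γ₁).card : ℤ)
        = (-1) ^ (Γ₁.card + 1) * m) :
    m = 0 := by
  obtain ⟨S, hS⟩ : Γ.Nonempty := card_pos.mp (by omega)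
  set Γ₂ := Γ.erase S with hΓ₂
  have hne2 : Γ₂.Nonempty := by
    rw [← card_pos, card_erase_of_mem hS]; omega
  have hu : {S} ∪ Γ₂ = Γ := by
    rw [hΓ₂]; ext x
    simp only [mem_union, mem_singleton, mem_erase]
    constructor
    · rintro (rfl | ⟨-, h⟩) <;> [exact hS; exact h]
    · intro h; by_cases hx : x = S <;> simp [hx, h]
  have hd : Disjoint {S} Γ₂ := by
    simp [hΓ₂, disjoint_singleton_left]
  have h1 := hm {S} Γ₂ hu hd (singleton_nonempty S) hne2
  have h2 := hm Γ₂ {S} (by rw [union_comm]; exact hu) hd.symm hne2 (singleton_nonempty S)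
  have hc2 : Γ₂.card = Γ.card - 1 := card_erase_of_mem hS
  obtain ⟨k, hk⟩ := heven
  have hk2 : Γ₂.card + 1 = 2 * (k - 1) + 2 := by omega
  rw [hk2] at h2
  have e1 : ((-1 : ℤ)) ^ (1 + 1) = 1 := by norm_num
  have e2 : ((-1 : ℤ)) ^ (2 * (k - 1) + 2) = 1 := by
    rw [pow_add, pow_mul]; norm_num
  rw [card_singleton, e1, one_mul] at h1
  rw [e2, one_mul] at h2
  omega
end
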